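/- arXiv:2008.04183 — 4 statements merged into one kernel-verified Lean document; each statement's English description precedes it below -/
import Mathlib

section
/- If R : V → V satisfies R(v) ≤ v and R(v) ~ v for every vertex v, then the updated map satisfies T_R(v) ≤ R(v) and T_R(v) ~ v for every vertex v; consequently, every iterate (T_R)^[k] also satisfies these two properties (it is pointwise ≤ the identity and maps every vertex into its own connected component). -/
open scoped Classical in
/-- The update map `T_R`: `upd G R v` is the minimum of the finite nonempty set
`{R v} ∪ {R b : ∃ a, a adjacent to b and R a = R v}`. -/
noncomputable def upd {V : Type*} [Fintype V] [LinearOrder V] (G : SimpleGraph V)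
    (R : V → V) (v : V) : V :=
  (insert (R v) ((Finset.univ.filter fun b => ∃ a, G.Adj a b ∧ R a = R v).image R)).min'
    (Finset.insert_nonempty _ _)

theorem stmt1 {V : Type*} [Fintype V] [Nonempty V] [LinearOrder V] (G : SimpleGraph V)
    (R : V → V)
    (hle : ∀ v, R v ≤ v)
    (hreach : ∀ v, G.Reachable (R v) v) :
    (∀ v, upd G R v ≤ R v ∧ G.Reachable (upd G R v) v) ∧
    (∀ k v, (upd G R)^[k] v ≤ v ∧ G.Reachable ((upd G R)^[k] v) v) := by
  classical
  have hmain : ∀ v, upd G R v ≤ R v ∧ G.Reachable (upd G R v) v := by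
    intro v
    constructor
    · exact Finset.min'_le _ _ (Finset.mem_insert_self _ _)
    · have hmem := Finset.min'_mem
        (insert (R v) ((Finset.univ.filter fun b => ∃ a, G.Adj a b ∧ R a = R v).image R))
        (Finset.insert_nonempty _ _)
      rw [Finset.mem_insert] at hmem
      rcases hmem with h | h
      · rw [show upd G R v = R v from h]; exact hreach v
      · rw [Finset.mem_image] at h
        obtain ⟨b, hb, hub⟩ := h
        rw [Finset.mem_filter] at hb
        obtain ⟨-, a, hab, hRa⟩ := hb
        have : upd G R v = R b := hub.symm
        rw [this]
        exact (hreach b).trans <| ((G.adj_symm hab).reachable).trans <|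
          ((hreach a).symm.trans (hRa ▸ hreach v))
  refine ⟨hmain, ?_⟩
  intro k
  induction k with
  | zero => intro v; simp [SimpleGraph.Reachable.refl]
  | succ n ih =>
    intro v
    rw [Function.iterate_succ_apply']
    have h1 := hmain ((upd G R)^[n] v)
    have h2 := ih v
    exact ⟨le_trans (h1.1.trans (hle _)) h2.1, h1.2.trans h2.2⟩
end

section
/- (Correctness of the connected-components iteration) The sequence R_0, R_1, R_2, … is pointwise non-increasing and eventually constant, and its eventual value is the component-minimum map: there exists K such that R_k = ρ for all k ≥ K. -/
open scoped Classical in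
/-- The component-minimum map: `rho G v` is the least element of the
connected component of `v`. -/
noncomputable def rho {V : Type*} [Fintype V] [LinearOrder V] (G : SimpleGraph V) (v : V) : V :=
  (Finset.univ.filter fun w => G.Reachable w v).min'
    ⟨v, Finset.mem_filter.mpr ⟨Finset.mem_univ v, SimpleGraph.Reachable.refl v⟩⟩

/-- The algorithm's iteration: `R_0 = id`, `R_{k+1} = (T_{R_k})^[card V]`. -/
noncomputable def Rseq {V : Type*} [Fintype V] [LinearOrder V] (G : SimpleGraph V) :
    ℕ → V → V
  | 0 => id
  | k + 1 => (upd G (Rseq G k))^[Fintype.card V]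

open scoped Classical
open Finset

section Aux

variable {V : Type*} [Fintype V] [LinearOrder V] (G : SimpleGraph V)

/-- The invariant maintained by the iteration. -/
def Good (R : V → V) : Prop :=
  (∀ v, R v ≤ v) ∧ (∀ v, G.Reachable (R v) v) ∧ (∀ v, R (R v) = R v)

lemma upd_le (R : V → V) (v : V) : upd G R v ≤ R v :=
  Finset.min'_le _ _ (Finset.mem_insert_self _ _)

lemma upd_cases (R : V → V) (v : V) :
    upd G R v = R v ∨ ∃ b, (∃ a, G.Adj a b ∧ R a = R v) ∧ upd G R v = R b := by
  have h : upd G R v ∈ insert (R v)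
      ((Finset.univ.filter fun b => ∃ a, G.Adj a b ∧ R a = R v).image R) :=
    Finset.min'_mem _ _
  rw [Finset.mem_insert] at h
  rcases h with h | h
  · exact Or.inl h
  · rw [Finset.mem_image] at h
    obtain ⟨b, hb, hbe⟩ := h
    rw [Finset.mem_filter] at hb
    exact Or.inr ⟨b, hb.2, hbe.symm⟩

lemma upd_reach (R : V → V) (hR : ∀ v, G.Reachable (R v) v) (v : V) :
    G.Reachable (upd G R v) v := by
  rcases upd_cases G R v with h | ⟨b, ⟨a, hab, ha⟩, h⟩
  · rw [h]; exact hR v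
  · rw [h]
    exact ((hR b).trans hab.symm.reachable).trans ((hR a).symm.trans (ha ▸ hR v))

lemma upd_idem (R : V → V) (hR : ∀ v, R (R v) = R v) (v : V) :
    R (upd G R v) = upd G R v := by
  rcases upd_cases G R v with h | ⟨b, _, h⟩ <;> rw [h] <;> exact hR _

lemma iterate_le_self (f : V → V) (hf : ∀ v, f v ≤ v) : ∀ (n : ℕ) (v : V), f^[n] v ≤ v := by
  intro n
  induction n with
  | zero => intro v; simp
  | succ m ih =>
    intro v
    rw [Function.iterate_succ_apply]
    exact (ih (f v)).trans (hf v)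

lemma iterate_fix (f : V → V) (hf : ∀ v, f v ≤ v) (v : V) :
    f (f^[Fintype.card V] v) = f^[Fintype.card V] v := by
  set N := Fintype.card V with hN
  have key : ∃ i < N, f (f^[i] v) = f^[i] v := by
    by_contra hcon
    push_neg at hcon
    have hlt : ∀ i < N, f (f^[i] v) < f^[i] v := fun i hi =>
      lt_of_le_of_ne (hf _) (hcon i hi)
    set e : V ≃o Fin N := (monoEquivOfFin V rfl).symm
    have hmono : ∀ i ≤ N, i + (e (f^[i] v) : ℕ) ≤ (e v : ℕ) := by
      intro i
      induction i with
      | zero => simp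
      | succ j ih =>
        intro hj
        have h1 : (e (f^[j+1] v) : ℕ) < (e (f^[j] v) : ℕ) := by
          have hstep : f^[j+1] v = f (f^[j] v) := Function.iterate_succ_apply' f j v
          rw [hstep]
          exact e.strictMono (hlt j (by omega))
        have := ih (by omega)
        omega
    have := hmono N le_rfl
    have hv : (e v : ℕ) < N := (e v).2
    omega
  obtain ⟨i, hi, hfix⟩ := key
  have h1 : f^[N] v = f^[i] v := by
    have : f^[N - i] (f^[i] v) = f^[i] v := Function.iterate_fixed hfix _
    calc f^[N] v = f^[(N - i) + i] v := by rw [Nat.sub_add_cancel hi.le]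
    _ = f^[N - i] (f^[i] v) := by rw [Function.iterate_add_apply]
    _ = f^[i] v := this
  rw [h1, hfix]

lemma good_step {R : V → V} (hR : Good G R) : Good G ((upd G R)^[Fintype.card V]) := by
  have hle : ∀ v, upd G R v ≤ v := fun v => (upd_le G R v).trans (hR.1 v)
  refine ⟨iterate_le_self (upd G R) hle _, ?_, ?_⟩
  · intro v
    have : ∀ n, G.Reachable ((upd G R)^[n] v) v := by
      intro n
      induction n with
      | zero => exact SimpleGraph.Reachable.refl v
      | succ m ih =>
        rw [Function.iterate_succ_apply']
        exact (upd_reach G R hR.2.1 _).trans ih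
    exact this _
  · intro v
    exact Function.iterate_fixed (iterate_fix (upd G R) hle v) _

lemma good_Rseq : ∀ k, Good G (Rseq G k) := by
  intro k
  induction k with
  | zero =>
    exact ⟨fun v => le_rfl, fun v => SimpleGraph.Reachable.refl v, fun v => rfl⟩
  | succ m ih =>
    show Good G ((upd G (Rseq G m))^[Fintype.card V])
    exact good_step G ih

set_option maxHeartbeats 1000000 in
lemma rho_le_of_reach {w v : V} (h : G.Reachable w v) : rho G v ≤ w := by
  unfold rho
  apply Finset.min'_le
  simp only [Finset.mem_filter, Finset.mem_univ, true_and]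
  exact h

set_option maxHeartbeats 1000000 in
lemma rho_reach (v : V) : G.Reachable (rho G v) v := by
  have h : rho G v ∈ Finset.univ.filter fun w => G.Reachable w v := by
    unfold rho
    apply Finset.min'_mem
  simp only [Finset.mem_filter] at h
  exact h.2

lemma rho_congr {u v : V} (h : G.Reachable u v) : rho G u = rho G v :=
  le_antisymm (rho_le_of_reach G ((rho_reach G v).trans h.symm))
    (rho_le_of_reach G ((rho_reach G u).trans h))

lemma upd_rho (v : V) : upd G (rho G) v = rho G v := by
  rcases upd_cases G (rho G) v with h | ⟨b, ⟨a, hab, ha⟩, h⟩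
  · exact h
  · rw [h, (rho_congr G hab.symm.reachable).trans ha]

lemma adj_le (R : V → V) (hfix : ∀ v, upd G R v = R v) {a b : V} (hab : G.Adj a b) :
    R a ≤ R b := by
  have hmem : R b ∈ insert (R a)
      ((Finset.univ.filter fun b' => ∃ a', G.Adj a' b' ∧ R a' = R a).image R) :=
    Finset.mem_insert_of_mem (Finset.mem_image.mpr
      ⟨b, Finset.mem_filter.mpr ⟨Finset.mem_univ _, a, hab, rfl⟩, rfl⟩)
  calc R a = upd G R a := (hfix a).symm
  _ ≤ R b := Finset.min'_le _ _ hmem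

lemma reach_congr (R : V → V) (hfix : ∀ v, upd G R v = R v) {u v : V}
    (h : G.Reachable u v) : R u = R v := by
  obtain ⟨p⟩ := h
  induction p with
  | nil => rfl
  | cons hadj _ ih =>
    exact (le_antisymm (adj_le G R hfix hadj) (adj_le G R hfix hadj.symm)).trans ih

lemma fixed_eq_rho (R : V → V) (hR : Good G R) (hfix : ∀ v, upd G R v = R v) :
    R = rho G := by
  funext v
  refine le_antisymm ?_ (rho_le_of_reach G (hR.2.1 v))
  have h1 : R (rho G v) = R v := reach_congr G R hfix (rho_reach G v)
  calc R v = R (rho G v) := h1.symm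
  _ ≤ rho G v := hR.1 _

end Aux

theorem stmt3 {V : Type*} [Fintype V] [Nonempty V] [LinearOrder V] (G : SimpleGraph V) :
    (∀ k v, Rseq G (k + 1) v ≤ Rseq G k v) ∧
    (∃ K, ∀ k, K ≤ k → Rseq G k = rho G) := by
  have hN : 0 < Fintype.card V := Fintype.card_pos
  obtain ⟨m, hm⟩ : ∃ m, Fintype.card V = m + 1 := ⟨Fintype.card V - 1, by omega⟩
  have part1 : ∀ k v, Rseq G (k + 1) v ≤ Rseq G k v := by
    intro k v
    have hG := good_Rseq G k
    have hle : ∀ w, upd G (Rseq G k) w ≤ w := fun w => (upd_le G _ w).trans (hG.1 w)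
    show (upd G (Rseq G k))^[Fintype.card V] v ≤ Rseq G k v
    rw [hm, Function.iterate_succ_apply]
    exact (iterate_le_self _ hle m _).trans (upd_le G _ v)
  refine ⟨part1, ?_⟩
  -- termination
  set e : V ≃o Fin (Fintype.card V) := (monoEquivOfFin V rfl).symm with he
  set S : ℕ → ℕ := fun k => ∑ v : V, (e (Rseq G k v) : ℕ) with hS
  have hSanti : ∀ k, S (k + 1) ≤ S k := by
    intro k
    exact Finset.sum_le_sum fun v _ => e.monotone (part1 k v)
  have hSanti' : Antitone S := antitone_nat_of_succ_le hSanti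
  obtain ⟨K, hK⟩ : ∃ K, S K = sInf (Set.range S) := Nat.sInf_mem (Set.range_nonempty S)
  have hSconst : ∀ k, K ≤ k → S k = S K := by
    intro k hk
    refine le_antisymm (hSanti' hk) ?_
    rw [hK]
    exact Nat.sInf_le ⟨k, rfl⟩
  -- Rseq (K+1) = Rseq K
  have heq : Rseq G (K + 1) = Rseq G K := by
    funext v
    have hsum : ∑ v : V, (e (Rseq G (K+1) v) : ℕ) = ∑ v : V, (e (Rseq G K v) : ℕ) := by
      have h1 := hSconst (K + 1) (Nat.le_succ K)
      have h2 := hSconst K le_rfl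
      simpa [hS] using h1.trans h2.symm
    have := (Finset.sum_eq_sum_iff_of_le
      (fun v _ => show ((e (Rseq G (K+1) v) : ℕ)) ≤ (e (Rseq G K v) : ℕ) from e.monotone (part1 K v))).mp hsum v (Finset.mem_univ v)
    exact e.injective (Fin.val_injective this)
  -- hence upd G (Rseq G K) fixes everything
  have hfix : ∀ v, upd G (Rseq G K) v = Rseq G K v := by
    intro v
    have hG := good_Rseq G K
    have hle : ∀ w, upd G (Rseq G K) w ≤ w := fun w => (upd_le G _ w).trans (hG.1 w)
    have h1 : Rseq G (K + 1) v = (upd G (Rseq G K))^[Fintype.card V] v := rfl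
    have h2 : (upd G (Rseq G K))^[Fintype.card V] v ≤ upd G (Rseq G K) v := by
      rw [hm, Function.iterate_succ_apply]
      exact iterate_le_self _ hle m _
    have h3 : upd G (Rseq G K) v ≤ Rseq G K v := upd_le G _ v
    have h4 : Rseq G K v ≤ upd G (Rseq G K) v := by
      calc Rseq G K v = Rseq G (K + 1) v := by rw [heq]
      _ ≤ upd G (Rseq G K) v := h1 ▸ h2
    exact le_antisymm h3 h4
  have hKrho : Rseq G K = rho G := fixed_eq_rho G _ (good_Rseq G K) hfix
  refine ⟨K, ?_⟩
  intro k hk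
  induction k, hk using Nat.le_induction with
  | base => exact hKrho
  | succ n hn ih =>
    show (upd G (Rseq G n))^[Fintype.card V] = rho G
    rw [ih]
    funext v
    have hupd : upd G (rho G) = rho G := funext (upd_rho G)
    rw [hupd, hm, Function.iterate_succ_apply]
    exact Function.iterate_fixed (rho_congr G (rho_reach G v)) m
end

section
/- (Iteration bound, Lemma 1) Let N be the maximum, over the connected components C of G, of the number of edges of G with both endpoints in C. Then for every k ≥ 2 · ⌈log₂(N + 1)⌉, the iterate R_k equals the component-minimum map ρ; that is, the iterative merging process finds all connected components after at most 2 · ⌈log₂(N + 1)⌉ iterations. -/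
open scoped Classical in
/-- The maximum, over the connected components `C` of `G`, of the number of
edges of `G` with both endpoints in `C`. -/
noncomputable def Nmax {V : Type*} [Fintype V] [LinearOrder V] (G : SimpleGraph V) : ℕ :=
  Finset.univ.sup fun c : G.ConnectedComponent =>
    (G.edgeFinset.filter fun e => ∀ x ∈ e, G.connectedComponentMk x = c).card

namespace CC
open scoped Classical
set_option linter.unusedSectionVars false
variable {V : Type*} [Fintype V] [LinearOrder V] {G : SimpleGraph V} {R : V → V}

/-- The invariants maintained by the algorithm. -/
structure Good (G : SimpleGraph V) (R : V → V) : Prop where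
  idem : ∀ v, R (R v) = R v
  le : ∀ v, R v ≤ v
  reach : ∀ v, G.Reachable (R v) v

lemma upd_le_self (R : V → V) (v : V) : upd G R v ≤ R v :=
  Finset.min'_le _ _ (Finset.mem_insert_self _ _)

lemma upd_le_cand (R : V → V) {v a b : V} (hab : G.Adj a b) (ha : R a = R v) :
    upd G R v ≤ R b := by
  apply Finset.min'_le
  exact Finset.mem_insert_of_mem (Finset.mem_image_of_mem R
    (Finset.mem_filter.mpr ⟨Finset.mem_univ _, a, hab, ha⟩))

lemma upd_mem (R : V → V) (v : V) :
    upd G R v = R v ∨ ∃ b a, G.Adj a b ∧ R a = R v ∧ upd G R v = R b := by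
  have h := Finset.min'_mem (insert (R v)
    ((Finset.univ.filter fun b => ∃ a, G.Adj a b ∧ R a = R v).image R))
    (Finset.insert_nonempty _ _)
  rw [Finset.mem_insert] at h
  rcases h with h | h
  · exact Or.inl h
  · rcases Finset.mem_image.mp h with ⟨b, hb, hbe⟩
    rcases (Finset.mem_filter.mp hb).2 with ⟨a, hab, ha⟩
    exact Or.inr ⟨b, a, hab, ha, hbe.symm⟩

lemma upd_reach (hG : Good G R) (v : V) : G.Reachable (upd G R v) v := by
  rcases upd_mem (G := G) R v with h | ⟨b, a, hab, ha, he⟩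
  · rw [h]; exact hG.reach v
  · rw [he]
    exact ((hG.reach b).trans (hab.reachable.symm)).trans
      (((hG.reach a).symm.trans (ha ▸ hG.reach v)))

lemma upd_apply_R (hG : Good G R) (v : V) : upd G R (R v) = upd G R v := by
  unfold upd
  have h1 : R (R v) = R v := hG.idem v
  simp only [h1]

lemma iter_antitone (hG : Good G R) (v : V) :
    ∀ {m m' : ℕ}, m ≤ m' → (upd G R)^[m'] v ≤ (upd G R)^[m] v := by
  have step : ∀ w, upd G R w ≤ w := fun w => (upd_le_self R w).trans (hG.le w)
  intro m m' h
  induction h with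
  | refl => exact le_rfl
  | step h ih => exact le_trans (by rw [Function.iterate_succ_apply']; exact step _) ih

lemma iter_le_self (hG : Good G R) (m : ℕ) (v : V) : (upd G R)^[m] v ≤ v :=
  iter_antitone hG v (Nat.zero_le m)

lemma iter_reach (hG : Good G R) (m : ℕ) (v : V) : G.Reachable ((upd G R)^[m] v) v := by
  induction m with
  | zero => exact SimpleGraph.Reachable.refl v
  | succ m ih =>
    rw [Function.iterate_succ_apply']
    exact (upd_reach hG _).trans ih

lemma iter_fixed (hG : Good G R) (v : V) :
    upd G R ((upd G R)^[Fintype.card V] v) = (upd G R)^[Fintype.card V] v := by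
  set n := Fintype.card V with hn
  have hlt : Fintype.card V < Fintype.card (Fin (n + 1)) := by simp [hn]
  obtain ⟨i, j, hne, heq⟩ := Fintype.exists_ne_map_eq_of_card_lt
    (fun m : Fin (n + 1) => (upd G R)^[(m : ℕ)] v) hlt
  wlog hij : (i : ℕ) < (j : ℕ) generalizing i j
  · exact this j i hne.symm heq.symm (lt_of_le_of_ne (not_lt.mp hij)
      (fun h => hne (Fin.val_injective h.symm)))
  have h1 : (upd G R)^[(i : ℕ) + 1] v = (upd G R)^[(i : ℕ)] v := by
    apply le_antisymm (iter_antitone hG v (Nat.le_succ _))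
    calc (upd G R)^[(i : ℕ)] v = (upd G R)^[(j : ℕ)] v := heq
    _ ≤ (upd G R)^[(i : ℕ) + 1] v := iter_antitone hG v hij
  have hfix : upd G R ((upd G R)^[(i:ℕ)] v) = (upd G R)^[(i:ℕ)] v := by
    rw [Function.iterate_succ_apply'] at h1; exact h1
  have hstay : ∀ m, (upd G R)^[(i:ℕ) + m] v = (upd G R)^[(i:ℕ)] v := by
    intro m
    induction m with
    | zero => rfl
    | succ m ih => rw [← Nat.add_assoc, Function.iterate_succ_apply', ih, hfix]
  have hin : (i : ℕ) ≤ n := by omega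
  obtain ⟨m, hm⟩ := Nat.le.dest hin
  rw [← hm, hstay m]; exact hfix

lemma crossing_walk {P : V → Prop} {u w : V} (p : G.Walk u w) :
    P u → ¬ P w → ∃ a b, G.Adj a b ∧ P a ∧ ¬ P b := by
  induction p with
  | nil => intro hu hw; exact absurd hu hw
  | @cons x y z hadj q ih =>
    intro hu hw
    by_cases hy : P y
    · exact ih hy hw
    · exact ⟨x, y, hadj, hu, hy⟩

lemma crossing {P : V → Prop} {u w : V} (h : G.Reachable u w) (hu : P u) (hw : ¬ P w) :
    ∃ a b, G.Adj a b ∧ P a ∧ ¬ P b := by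
  obtain ⟨p⟩ := h
  exact crossing_walk p hu hw

lemma exists_adj {u w : V} (h : G.Reachable u w) (hne : u ≠ w) : ∃ y, G.Adj u y := by
  obtain ⟨p⟩ := h
  cases p with
  | nil => exact absurd rfl hne
  | cons h q => exact ⟨_, h⟩

open scoped Classical in
/-- The roots of `R` in the connected component of `w`. -/
noncomputable def roots (G : SimpleGraph V) (R : V → V) (w : V) : Finset V :=
  Finset.univ.filter fun c => R c = c ∧ G.Reachable c w

lemma mem_roots {c w : V} : c ∈ roots G R w ↔ R c = c ∧ G.Reachable c w := by
  simp [roots]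

lemma R_mem_roots (hG : Good G R) (w : V) : R w ∈ roots G R w :=
  mem_roots.mpr ⟨hG.idem w, hG.reach w⟩

lemma roots_nonempty (hG : Good G R) (w : V) : 1 ≤ (roots G R w).card :=
  Finset.card_pos.mpr ⟨R w, R_mem_roots hG w⟩

section
variable [Nonempty V]

lemma good_next (hG : Good G R) : Good G ((upd G R)^[Fintype.card V]) := by
  refine ⟨fun v => ?_, fun v => iter_le_self hG _ v, fun v => iter_reach hG _ v⟩
  exact Function.iterate_fixed (iter_fixed hG v) _

lemma next_apply_R (hG : Good G R) (v : V) :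
    (upd G R)^[Fintype.card V] (R v) = (upd G R)^[Fintype.card V] v := by
  obtain ⟨m, hm⟩ : ∃ m, Fintype.card V = m + 1 :=
    ⟨Fintype.card V - 1, by have := Fintype.card_pos (α := V); omega⟩
  rw [hm, Function.iterate_succ_apply, Function.iterate_succ_apply, upd_apply_R hG]

lemma next_root (hG : Good G R) {c : V} (hc : (upd G R)^[Fintype.card V] c = c) :
    upd G R c = c ∧ R c = c := by
  have h1 : (upd G R)^[Fintype.card V] c ≤ (upd G R)^[1] c :=
    iter_antitone hG c Fintype.card_pos
  rw [hc, Function.iterate_one] at h1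
  have h2 : upd G R c ≤ R c := upd_le_self R c
  have h3 : R c ≤ c := hG.le c
  exact ⟨le_antisymm ((upd_le_self R c).trans h3) h1, le_antisymm h3 (h1.trans h2)⟩

lemma next_root_indep (hG : Good G R) {a b : V}
    (ha : (upd G R)^[Fintype.card V] a = a) (hb : (upd G R)^[Fintype.card V] b = b)
    (hab : G.Adj a b) : False := by
  obtain ⟨hua, hra⟩ := next_root hG ha
  obtain ⟨hub, hrb⟩ := next_root hG hb
  have h1 : upd G R b ≤ R a := upd_le_cand R hab.symm rfl
  have h2 : upd G R a ≤ R b := upd_le_cand R hab rfl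
  rw [hub, hra] at h1
  rw [hua, hrb] at h2
  exact hab.ne (le_antisymm h2 h1)

lemma absorption (hG : Good G R) {c : V}
    (hc : (upd G ((upd G R)^[Fintype.card V]))^[Fintype.card V] c = c)
    {a b : V} (hab : G.Adj a b) (hRa : (upd G R)^[Fintype.card V] a = c)
    (hRb : (upd G R)^[Fintype.card V] b ≠ c) :
    ∃ x, R x = x ∧ x ≠ c ∧ (upd G R)^[Fintype.card V] x = c := by
  set R' := (upd G R)^[Fintype.card V] with hR'
  by_contra hcon
  push_neg at hcon
  have habs : ∀ x, R x = x → R' x = c → x = c := fun x h1 h2 =>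
    by_contra fun hne => hcon x h1 hne h2
  have hG' : Good G R' := good_next hG
  obtain ⟨huc', hc'⟩ := next_root hG' hc
  obtain ⟨huc, hrc⟩ := next_root hG hc'
  have hRac : R a = c := habs (R a) (hG.idem a) ((next_apply_R hG a).trans hRa)
  have h1 : c < R' b := by
    have hcand : upd G R' c ≤ R' b := upd_le_cand R' hab (hRa.trans hc'.symm)
    rw [huc'] at hcand
    exact lt_of_le_of_ne hcand (fun h => hRb h.symm)
  have h2 : upd G R b ≤ R a := upd_le_cand R hab.symm rfl
  have h3 : R' b ≤ upd G R b := by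
    have := iter_antitone hG b (m := 1) (m' := Fintype.card V) Fintype.card_pos
    rwa [Function.iterate_one] at this
  exact absurd (h3.trans (h2.trans_eq hRac)) (not_le.mpr h1)

lemma roots_next_subset (hG : Good G R) (w : V) :
    roots G ((upd G R)^[Fintype.card V]) w ⊆ roots G R w := by
  intro c hc
  rw [mem_roots] at *
  exact ⟨(next_root hG hc.1).2, hc.2⟩

lemma roots_strict (hG : Good G R) (w : V)
    (h2 : 2 ≤ (roots G ((upd G R)^[Fintype.card V]) w).card) :
    (roots G ((upd G R)^[Fintype.card V]) w).card < (roots G R w).card := by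
  set R' := (upd G R)^[Fintype.card V] with hR'
  have hne : (roots G R' w).Nonempty := Finset.card_pos.mp (by omega)
  set c := (roots G R' w).max' hne with hcdef
  have hcmem : c ∈ roots G R' w := (roots G R' w).max'_mem hne
  obtain ⟨hc', hcw⟩ := mem_roots.mp hcmem
  obtain ⟨c', hc'mem, hcc'⟩ : ∃ c', c' ∈ roots G R' w ∧ c' ≠ c := by
    rcases Finset.exists_mem_ne (s := roots G R' w) (by omega) c with ⟨c', h1, h2⟩
    exact ⟨c', h1, h2⟩
  obtain ⟨hc'root, hc'w⟩ := mem_roots.mp hc'mem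
  have hrc : R c = c := (next_root hG hc').2
  have hrc' : R c' = c' := (next_root hG hc'root).2
  obtain ⟨a, b, hab, hpa, hpb⟩ := crossing (P := fun x => R x = c)
    (hcw.trans hc'w.symm) hrc (fun h => hcc' (hrc'.symm.trans h))
  set x := R b with hx
  have hxroot : R x = x := hG.idem b
  have hclex : c < x := by
    have h1 : upd G R c ≤ R b := upd_le_cand R hab (hpa.trans hrc.symm)
    rw [(next_root hG hc').1] at h1
    exact lt_of_le_of_ne h1 (fun h => hpb (h ▸ rfl))
  have hxw : G.Reachable x w := ((hG.reach b).trans (hab.symm.reachable)).trans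
    ((hpa ▸ hG.reach a).symm.trans hcw)
  have hxnot : x ∉ roots G R' w := by
    intro hmem
    exact absurd (Finset.le_max' _ x hmem) (not_le.mpr hclex)
  apply Finset.card_lt_card
  refine ⟨roots_next_subset hG w, fun hsub => hxnot (hsub (mem_roots.mpr ⟨hxroot, hxw⟩))⟩

lemma roots_two_step (hG : Good G R) (w : V)
    (h2 : 2 ≤ (roots G ((upd G R)^[Fintype.card V]) w).card) :
    (roots G ((upd G ((upd G R)^[Fintype.card V]))^[Fintype.card V]) w).card
      + (roots G ((upd G R)^[Fintype.card V]) w).card ≤ (roots G R w).card := by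
  set R' := (upd G R)^[Fintype.card V] with hR'
  set R'' := (upd G R')^[Fintype.card V] with hR''
  have hG' : Good G R' := good_next hG
  have key : ∀ c'' ∈ roots G R'' w, ∃ x, R x = x ∧ x ≠ c'' ∧ R' x = c'' := by
    intro c'' hc''mem
    obtain ⟨hc''root, hc''w⟩ := mem_roots.mp hc''mem
    have hc''r' : R' c'' = c'' := (next_root hG' hc''root).2
    obtain ⟨c', hc'mem, hcc'⟩ : ∃ c', c' ∈ roots G R' w ∧ c' ≠ c'' := by
      rcases Finset.exists_mem_ne (s := roots G R' w) (by omega) c'' with ⟨c', h1, h2⟩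
      exact ⟨c', h1, h2⟩
    obtain ⟨hc'root, hc'w⟩ := mem_roots.mp hc'mem
    obtain ⟨a, b, hab, hpa, hpb⟩ := crossing (P := fun x => R' x = c'')
      (hc''w.trans hc'w.symm) hc''r' (fun h => hcc' (hc'root.symm.trans h))
    exact absorption hG hc''root hab hpa hpb
  set f : V → V := fun c =>
    if h : ∃ x, R x = x ∧ x ≠ c ∧ R' x = c then h.choose else c with hf
  have hspec : ∀ c'' ∈ roots G R'' w, R (f c'') = f c'' ∧ f c'' ≠ c'' ∧ R' (f c'') = c'' := by
    intro c'' hm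
    have h := key c'' hm
    simp only [hf, dif_pos h]
    exact h.choose_spec
  have hcard : (roots G R'' w).card ≤ ((roots G R w) \ (roots G R' w)).card := by
    apply Finset.card_le_card_of_injOn f
    · intro c'' hm
      obtain ⟨h1, h2, h3⟩ := hspec c'' hm
      rw [Finset.mem_coe, Finset.mem_sdiff, mem_roots, mem_roots]
      refine ⟨⟨h1, ?_⟩, ?_⟩
      · have hr := hG'.reach (f c'')
        rw [h3] at hr
        exact hr.symm.trans (mem_roots.mp hm).2
      · rintro ⟨h4, -⟩
        exact h2 (h4.symm.trans h3)
    · intro c1 h1 c2 h2 hfe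
      have e1 := (hspec c1 h1).2.2
      have e2 := (hspec c2 h2).2.2
      rw [hfe] at e1
      exact e1.symm.trans e2
  have hsub := roots_next_subset hG w
  rw [Finset.card_sdiff_of_subset (by exact hsub)] at hcard
  have hle := Finset.card_le_card hsub
  rw [← hR'] at hle
  omega

open scoped Classical in
lemma roots_one_le (hG : Good G R) (w : V) :
    (roots G ((upd G R)^[Fintype.card V]) w).card ≤ Nmax G + 1 := by
  set R' := (upd G R)^[Fintype.card V] with hR'
  by_cases htriv : ∀ u, G.Reachable u w → u = w
  · have : roots G R' w ⊆ {w} := by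
      intro c hc
      rw [Finset.mem_singleton]
      exact htriv c (mem_roots.mp hc).2
    calc (roots G R' w).card ≤ ({w} : Finset V).card := Finset.card_le_card this
    _ = 1 := Finset.card_singleton w
    _ ≤ Nmax G + 1 := by omega
  · push_neg at htriv
    obtain ⟨u, hu, hune⟩ := htriv
    set EC := G.edgeFinset.filter
      (fun e => ∀ x ∈ e, G.connectedComponentMk x = G.connectedComponentMk w) with hEC
    have hadjex : ∀ c ∈ roots G R' w, ∃ y, G.Adj c y := by
      intro c hc
      obtain ⟨hcr, hcw⟩ := mem_roots.mp hc
      by_cases hcweq : c = w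
      · exact exists_adj (hcweq ▸ hu.symm) (fun h => hune ((hcweq.symm.trans h).symm))
      · exact exists_adj hcw hcweq
    set nbr : V → V := fun c => if h : ∃ y, G.Adj c y then h.choose else c with hnbr
    have hnadj : ∀ c ∈ roots G R' w, G.Adj c (nbr c) := by
      intro c hc
      have h := hadjex c hc
      simp only [hnbr, dif_pos h]
      exact h.choose_spec
    have hcard : (roots G R' w).card ≤ EC.card := by
      apply Finset.card_le_card_of_injOn (fun c => s(c, nbr c))
      · intro c hc
        have hadj := hnadj c hc
        have hcw := (mem_roots.mp hc).2
        rw [hEC, Finset.mem_coe, Finset.mem_filter]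
        refine ⟨SimpleGraph.mem_edgeFinset.mpr hadj, ?_⟩
        intro x hx
        rw [Sym2.mem_iff] at hx
        rcases hx with h | h
        · subst h; exact SimpleGraph.ConnectedComponent.sound hcw
        · subst h
          exact SimpleGraph.ConnectedComponent.sound ((hadj.symm.reachable).trans hcw)
      · intro c1 h1 c2 h2 hfe
        simp only [Sym2.eq_iff] at hfe
        rcases hfe with ⟨h, -⟩ | ⟨hA, hB⟩
        · exact h
        · exfalso
          have hadj2 := hnadj c2 h2
          have hadj21 : G.Adj c2 c1 := by rw [hA]; exact hadj2
          exact next_root_indep hG (mem_roots.mp h2).1 (mem_roots.mp h1).1 hadj21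
    refine hcard.trans ?_
    have : EC.card ≤ Nmax G := by
      rw [hEC, Nmax]
      exact Finset.le_sup (f := fun c : G.ConnectedComponent =>
        (G.edgeFinset.filter fun e => ∀ x ∈ e, G.connectedComponentMk x = c).card)
        (Finset.mem_univ (G.connectedComponentMk w))
    omega

open scoped Classical in
lemma roots_id_card (hN : Nmax G = 0) (w : V) : (roots G (id : V → V) w).card = 1 := by
  have hroots : roots G (id : V → V) w = {w} := by
    ext c
    rw [mem_roots, Finset.mem_singleton]
    constructor
    · rintro ⟨-, hcw⟩
      by_contra hne
      obtain ⟨y, hy⟩ := exists_adj hcw hne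
      have hmem : s(c, y) ∈ G.edgeFinset.filter
          (fun e => ∀ x ∈ e, G.connectedComponentMk x = G.connectedComponentMk w) := by
        rw [Finset.mem_filter]
        refine ⟨SimpleGraph.mem_edgeFinset.mpr hy, ?_⟩
        intro x hx
        rw [Sym2.mem_iff] at hx
        rcases hx with h | h
        · subst h; exact SimpleGraph.ConnectedComponent.sound hcw
        · subst h; exact SimpleGraph.ConnectedComponent.sound ((hy.symm.reachable).trans hcw)
      have h1 : 1 ≤ (G.edgeFinset.filter
          (fun e => ∀ x ∈ e, G.connectedComponentMk x = G.connectedComponentMk w)).card :=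
        Finset.card_pos.mpr ⟨_, hmem⟩
      have h2 : (G.edgeFinset.filter
          (fun e => ∀ x ∈ e, G.connectedComponentMk x = G.connectedComponentMk w)).card
          ≤ Nmax G := by
        rw [Nmax]
        exact Finset.le_sup (f := fun c : G.ConnectedComponent =>
          (G.edgeFinset.filter fun e => ∀ x ∈ e, G.connectedComponentMk x = c).card)
          (Finset.mem_univ (G.connectedComponentMk w))
      omega
    · rintro rfl
      exact ⟨rfl, SimpleGraph.Reachable.refl _⟩
  rw [hroots, Finset.card_singleton]

end

/-- The purely numerical convergence argument. -/
lemma num (N : ℕ) (r : ℕ → ℕ)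
    (h1 : ∀ k, 1 ≤ r k)
    (h2 : ∀ k, r (k+1) ≤ r k)
    (h3 : ∀ k, 2 ≤ r (k+1) → r (k+1) < r k)
    (h4 : ∀ k, 2 ≤ r (k+1) → r (k+2) + r (k+1) ≤ r k)
    (h5 : r 1 ≤ N + 1)
    (h0 : N = 0 → r 0 = 1) :
    ∀ k, 2 * Nat.clog 2 (N+1) ≤ k → r k = 1 := by
  have hmono : ∀ i j, i ≤ j → r j ≤ r i := by
    intro i j hij
    induction hij with
    | refl => exact le_rfl
    | step h ih => exact (h2 _).trans ih
  have honce : ∀ i j, i ≤ j → r i = 1 → r j = 1 := fun i j hij hi =>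
    le_antisymm (hi ▸ hmono i j hij) (h1 j)
  rcases Nat.eq_zero_or_pos N with hN | hN
  · subst hN
    intro k _
    exact honce 0 k (Nat.zero_le k) (h0 rfl)
  · set T := Nat.clog 2 (N+1) with hT
    have hpow : N + 1 ≤ 2 ^ T := Nat.le_pow_clog (by norm_num) _
    have hT1 : 1 ≤ T := by
      by_contra h
      have : T = 0 := by omega
      rw [this] at hpow
      simp at hpow
      omega
    have aux : ∀ t, r (2*t+1) = 1 ∨ 2^t * r (2*t+1) ≤ N + 1 := by
      intro t
      induction t with
      | zero => right; simpa using h5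
      | succ t ih =>
        rcases ih with ih | ih
        · left; exact honce (2*t+1) (2*(t+1)+1) (by omega) ih
        · by_cases hr : 2 ≤ r (2*t+2)
          · right
            have ha := h4 (2*t+1) (by rwa [show 2*t+1+1 = 2*t+2 by omega])
            have e2 : 2*t+1+2 = 2*t+3 := by omega
            have e3 : 2*t+1+1 = 2*t+2 := by omega
            rw [e2, e3] at ha
            have hb : r (2*t+3) ≤ r (2*t+2) := by
              have := h2 (2*t+2); rwa [show 2*t+2+1 = 2*t+3 by omega] at this
            have hc : 2 * r (2*t+3) ≤ r (2*t+1) := by omega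
            have he : 2*(t+1)+1 = 2*t+3 := by ring
            rw [he]
            calc 2^(t+1) * r (2*t+3) = 2^t * (2 * r (2*t+3)) := by ring
            _ ≤ 2^t * r (2*t+1) := Nat.mul_le_mul_left _ hc
            _ ≤ N + 1 := ih
          · left
            have : r (2*t+2) = 1 := le_antisymm (by omega) (h1 _)
            exact honce (2*t+2) (2*(t+1)+1) (by omega) this
    obtain ⟨t, hTt⟩ : ∃ t, T = t + 1 := ⟨T - 1, by omega⟩
    have hfin : r (2*t+2) = 1 := by
      rcases aux t with h | h
      · exact honce (2*t+1) (2*t+2) (by omega) h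
      · have hle2 : r (2*t+1) ≤ 2 := by
          by_contra hgt
          have h3' : 3 ≤ r (2*t+1) := by omega
          have hm3 : 2^t * 3 ≤ 2^t * r (2*t+1) := Nat.mul_le_mul_left _ h3'
          have hp : N + 1 ≤ 2^(t+1) := hTt ▸ hpow
          have hpos : 1 ≤ 2^t := Nat.one_le_two_pow
          have hps : 2^(t+1) = 2^t * 2 := by ring
          omega
        rcases Nat.lt_or_ge (r (2*t+1)) 2 with hlt | hge
        · have h11 : r (2*t+1) = 1 := le_antisymm (by omega) (h1 _)
          exact honce (2*t+1) (2*t+2) (by omega) h11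
        · have heq : r (2*t+1) = 2 := le_antisymm hle2 hge
          by_cases hr2 : 2 ≤ r (2*t+2)
          · exfalso
            have hs := h3 (2*t+1) (by rwa [show 2*t+1+1 = 2*t+2 by omega])
            rw [show 2*t+1+1 = 2*t+2 by omega] at hs
            omega
          · exact le_antisymm (by omega) (h1 _)
    intro k hk
    have : 2*t+2 ≤ k := by omega
    exact honce (2*t+2) k this hfin

section
variable (G)
lemma good_Rseq [Nonempty V] : ∀ k, Good G (Rseq G k)
  | 0 => ⟨fun v => rfl, fun v => le_rfl, fun v => SimpleGraph.Reachable.refl v⟩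
  | (k+1) => good_next (good_Rseq k)
end

end CC

theorem stmt6 {V : Type*} [Fintype V] [Nonempty V] [LinearOrder V] (G : SimpleGraph V) :
    ∀ k : ℕ, 2 * Nat.clog 2 (Nmax G + 1) ≤ k → Rseq G k = rho G := by
  classical
  intro k hk
  funext v
  have hcard : (CC.roots G (Rseq G k) v).card = 1 := by
    refine CC.num (Nmax G) (fun j => (CC.roots G (Rseq G j) v).card)
      (fun j => CC.roots_nonempty (CC.good_Rseq G j) v)
      (fun j => Finset.card_le_card (CC.roots_next_subset (CC.good_Rseq G j) v))
      (fun j hj => CC.roots_strict (CC.good_Rseq G j) v hj)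
      (fun j hj => CC.roots_two_step (CC.good_Rseq G j) v hj)
      (CC.roots_one_le (CC.good_Rseq G 0) v)
      (fun hN => CC.roots_id_card hN v) k hk
  have hG := CC.good_Rseq G k
  set R := Rseq G k with hR
  have huniq : ∀ x ∈ CC.roots G R v, ∀ y ∈ CC.roots G R v, x = y := by
    intro x hx y hy
    have := Finset.card_le_one.mp (le_of_eq hcard)
    exact this x hx y hy
  have hrmem : rho G v ∈ Finset.univ.filter (fun w => G.Reachable w v) :=
    Finset.min'_mem _ _
  have hrreach : G.Reachable (rho G v) v := (Finset.mem_filter.mp hrmem).2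
  have hge : rho G v ≤ R v := by
    apply Finset.min'_le
    exact Finset.mem_filter.mpr ⟨Finset.mem_univ _, hG.reach v⟩
  have hRrho : R (rho G v) ∈ CC.roots G R v :=
    CC.mem_roots.mpr ⟨hG.idem _, (hG.reach _).trans hrreach⟩
  have hRv : R v ∈ CC.roots G R v := CC.R_mem_roots hG v
  have heq : R v = R (rho G v) := huniq _ hRv _ hRrho
  have hle : R v ≤ rho G v := heq ▸ hG.le (rho G v)
  exact le_antisymm hle hge
end

section
/- Let α be a linearly ordered type, let N ≥ 1 be a natural number, and let f : α → α satisfy f(x) ≤ x for every x, and suppose the range of f is finite with at most N elements. Then f ∘ f^[N] = f^[N]; that is, iterating f converges to a fixed point after at most N steps, where N is the number of values (pieces) of f. -/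
theorem stmt9 {α : Type*} [LinearOrder α] (N : ℕ) (hN : 1 ≤ N)
    (f : α → α) (hle : ∀ x, f x ≤ x)
    (hfin : (Set.range f).Finite) (hcard : hfin.toFinset.card ≤ N) :
    f ∘ f^[N] = f^[N] := by
  funext x
  show f (f^[N] x) = f^[N] x
  -- the sequence of iterates is antitone
  have anti : Antitone (fun k => f^[k] x) := by
    apply antitone_nat_of_succ_le
    intro k
    rw [Function.iterate_succ_apply']
    exact hle _
  -- pigeonhole: two equal iterates among f^[1..N+1] x
  obtain ⟨i, _, j, _, hij, heq⟩ :
      ∃ i ∈ (Finset.univ : Finset (Fin (N+1))), ∃ j ∈ Finset.univ, i ≠ j ∧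
        f^[(i : ℕ)+1] x = f^[(j : ℕ)+1] x := by
    apply Finset.exists_ne_map_eq_of_card_lt_of_maps_to
      (t := hfin.toFinset)
    · simpa using Nat.lt_succ_of_le hcard
    · intro k _
      simp only [Finset.mem_coe]
      rw [Set.Finite.mem_toFinset, Function.iterate_succ_apply']
      exact Set.mem_range_self _
  -- wlog i < j
  wlog hlt : (i : ℕ) < (j : ℕ) generalizing i j
  · exact this j (Finset.mem_univ _) i (Finset.mem_univ _) hij.symm heq.symm
      (lt_of_le_of_ne (not_lt.1 hlt) (fun h => hij (Fin.ext h.symm)))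
  -- f^[i+2] x = f^[i+1] x
  have hsq : f^[((i : ℕ)+1)+1] x = f^[(i : ℕ)+1] x := by
    refine le_antisymm (anti (by omega)) ?_
    calc f^[(i : ℕ)+1] x = f^[(j : ℕ)+1] x := heq
      _ ≤ f^[((i : ℕ)+1)+1] x := anti (by omega)
  have hfix : f (f^[(i : ℕ)+1] x) = f^[(i : ℕ)+1] x := by
    rw [← Function.iterate_succ_apply' f ((i : ℕ)+1) x]; exact hsq
  have hiN : (i : ℕ) + 1 ≤ N := by have := j.isLt; omega
  have hNfix : f^[N] x = f^[(i : ℕ)+1] x := by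
    have : f^[N] x = f^[N - ((i : ℕ)+1)] (f^[(i : ℕ)+1] x) := by
      rw [← Function.iterate_add_apply]; congr 1; omega
    rw [this, Function.iterate_fixed hfix]
  rw [hNfix, hfix]
end
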